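/- Let [a_1,...,a_n] = p/q in lowest terms with a_n ≥ 2. Then [a_1,...,a_{n-1}, a_n + 1, a_n − 1, a_{n-1},...,a_1] = p² / (pq + (−1)^n). -/

import Mathlib

open Matrix

def cfQ : List ℚ → ℚ
  | [] => 0
  | [a] => a
  | a :: b :: l => a + 1 / cfQ (b :: l)

def Mtx (l : List ℕ) : Matrix (Fin 2) (Fin 2) ℤ :=
  (l.map fun a => !![(a : ℤ), 1; 1, 0]).prod

lemma Mtx_nil : Mtx [] = 1 := rfl

lemma Mtx_cons (a : ℕ) (l : List ℕ) : Mtx (a :: l) = !![(a : ℤ), 1; 1, 0] * Mtx l := by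
  simp [Mtx]

lemma Mtx_append (l₁ l₂ : List ℕ) : Mtx (l₁ ++ l₂) = Mtx l₁ * Mtx l₂ := by
  simp [Mtx]

lemma Mtx_single (a : ℕ) : Mtx [a] = !![(a : ℤ), 1; 1, 0] := by
  simp [Mtx]

lemma Mtx_reverse (l : List ℕ) : Mtx l.reverse = (Mtx l)ᵀ := by
  induction l with
  | nil => simp [Mtx_nil]
  | cons a l ih =>
    have hT : (!![(a : ℤ), 1; 1, 0])ᵀ = !![(a : ℤ), 1; 1, 0] := by
      ext i j; fin_cases i <;> fin_cases j <;> simp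
    rw [List.reverse_cons, Mtx_append, ih, Mtx_single, ← hT, Mtx_cons,
      ← Matrix.transpose_mul]

lemma Mtx_det (l : List ℕ) : (Mtx l).det = (-1) ^ l.length := by
  induction l with
  | nil => simp [Mtx_nil]
  | cons a l ih =>
    rw [Mtx_cons, Matrix.det_mul, ih]
    rw [Matrix.det_fin_two_of]
    simp [pow_succ]

lemma Mtx_pos (l : List ℕ) (h : ∀ x ∈ l, 0 < x) :
    1 ≤ Mtx l 0 0 ∧ 0 ≤ Mtx l 0 1 ∧ 0 ≤ Mtx l 1 0 ∧ 0 ≤ Mtx l 1 1 ∧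
      (l ≠ [] → 1 ≤ Mtx l 1 0) := by
  induction l with
  | nil => simp [Mtx_nil, Matrix.one_apply]
  | cons a l ih =>
    have ha : 1 ≤ (a : ℤ) := by exact_mod_cast h a List.mem_cons_self
    obtain ⟨h1, h2, h3, h4, _⟩ := ih (fun x hx => h x (List.mem_cons_of_mem _ hx))
    rw [Mtx_cons]
    simp only [Matrix.mul_apply, Fin.sum_univ_two, Matrix.cons_val_zero, Matrix.cons_val_one,
      Matrix.head_cons, Matrix.head_fin_const, Matrix.cons_val', Matrix.empty_val',
      Matrix.cons_val_fin_one, Matrix.of_apply]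
    refine ⟨by nlinarith, by nlinarith, by nlinarith, by nlinarith, fun _ => by nlinarith⟩

lemma cfQ_cons (a : ℚ) (l : List ℚ) : cfQ (a :: l) = a + 1 / cfQ l := by
  cases l with
  | nil => simp [cfQ]
  | cons b l => rfl

lemma cf_eq (l : List ℕ) (h : ∀ x ∈ l, 0 < x) :
    cfQ (List.map (fun x : ℕ => (x : ℚ)) l) = (Mtx l 0 0 : ℚ) / (Mtx l 1 0 : ℚ) := by
  induction l with
  | nil => simp [cfQ, Mtx_nil, Matrix.one_apply]
  | cons a l ih =>
    have h' : ∀ x ∈ l, 0 < x := fun x hx => h x (List.mem_cons_of_mem _ hx)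
    have h00 : 1 ≤ Mtx l 0 0 := (Mtx_pos l h').1
    have h00Q : (0 : ℚ) < ((Mtx l 0 0 : ℤ) : ℚ) := by exact_mod_cast h00
    rw [List.map_cons, cfQ_cons, ih h', one_div_div, Mtx_cons]
    simp only [Matrix.mul_apply, Fin.sum_univ_two, Matrix.cons_val_zero, Matrix.cons_val_one,
      Matrix.head_cons, Matrix.head_fin_const, Matrix.cons_val', Matrix.empty_val',
      Matrix.cons_val_fin_one, Matrix.of_apply]
    push_cast
    field_simp
    rw [mul_zero, add_zero, mul_div_cancel_left₀ _ h00Q.ne']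

lemma map_cast_eq (l : List ℕ) :
    (l.map (fun x => (x : ℚ))) = List.map (fun x : ℕ => (x : ℚ)) l := by
  induction l with
  | nil => rfl
  | cons a l ih => simpa using ih

lemma Mtx_coprime (l : List ℕ) : IsCoprime (Mtx l 0 0) (Mtx l 1 0) := by
  have h := Mtx_det l
  rw [Matrix.det_fin_two] at h
  rcases Nat.even_or_odd l.length with he | ho
  · exact ⟨Mtx l 1 1, -(Mtx l 0 1), by rw [he.neg_one_pow] at h; linarith⟩
  · exact ⟨-(Mtx l 1 1), Mtx l 0 1, by rw [ho.neg_one_pow] at h; linarith⟩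

theorem stmt8 (m : List ℕ) (aN : ℕ) (hpos : ∀ x ∈ m, 0 < x) (haN : 2 ≤ aN) :
    cfQ ((m ++ [aN + 1, aN - 1] ++ m.reverse).map (fun x => (x : ℚ))) =
      ((cfQ ((m ++ [aN]).map (fun x => (x : ℚ)))).num : ℚ) ^ 2 /
        (((cfQ ((m ++ [aN]).map (fun x => (x : ℚ)))).num : ℚ) *
            ((cfQ ((m ++ [aN]).map (fun x => (x : ℚ)))).den : ℚ) +
          (-1 : ℚ) ^ (m.length + 1)) := by
  simp only [map_cast_eq]
  have hposS : ∀ x ∈ m ++ [aN], 0 < x := by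
    intro x hx
    rcases List.mem_append.1 hx with h | h
    · exact hpos x h
    · simp at h; omega
  have hposB : ∀ x ∈ m ++ [aN + 1, aN - 1] ++ m.reverse, 0 < x := by
    intro x hx
    simp only [List.mem_append, List.mem_cons, List.mem_reverse,
      List.not_mem_nil, or_false] at hx
    rcases hx with (h | h | h) | h
    · exact hpos x h
    · omega
    · omega
    · exact hpos x h
  set P := Mtx (m ++ [aN]) 0 0 with hPdef
  set Q := Mtx (m ++ [aN]) 1 0 with hQdef
  have hQ1 : 1 ≤ Q := (Mtx_pos _ hposS).2.2.2.2 (by simp)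
  have hcop : Nat.Coprime P.natAbs Q.natAbs :=
    Int.isCoprime_iff_gcd_eq_one.mp (Mtx_coprime _)
  have hr : cfQ (List.map (fun x : ℕ => (x : ℚ)) (m ++ [aN])) = (P : ℚ) / (Q : ℚ) :=
    cf_eq _ hposS
  have hnum : (cfQ (List.map (fun x : ℕ => (x : ℚ)) (m ++ [aN]))).num = P := by
    rw [hr]; exact Rat.num_div_eq_of_coprime (by exact_mod_cast hQ1) hcop
  have hden : ((cfQ (List.map (fun x : ℕ => (x : ℚ)) (m ++ [aN]))).den : ℤ) = Q := by
    rw [hr]; exact Rat.den_div_eq_of_coprime (by exact_mod_cast hQ1) hcop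
  -- entries of the small matrix
  have hPe : P = Mtx m 0 0 * (aN : ℤ) + Mtx m 0 1 := by
    rw [hPdef, Mtx_append, Mtx_single]
    simp [Matrix.mul_apply, Fin.sum_univ_two]
  have hQe : Q = Mtx m 1 0 * (aN : ℤ) + Mtx m 1 1 := by
    rw [hQdef, Mtx_append, Mtx_single]
    simp [Matrix.mul_apply, Fin.sum_univ_two]
  have hdet : Mtx m 0 0 * Mtx m 1 1 - Mtx m 0 1 * Mtx m 1 0 = (-1) ^ m.length := by
    have := Mtx_det m; rwa [Matrix.det_fin_two] at this
  -- the big matrix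
  have hBig : Mtx (m ++ [aN + 1, aN - 1] ++ m.reverse) =
      Mtx m * (!![(aN : ℤ) + 1, 1; 1, 0] * !![(aN : ℤ) - 1, 1; 1, 0]) * (Mtx m)ᵀ := by
    have e1 : ((aN + 1 : ℕ) : ℤ) = (aN : ℤ) + 1 := by push_cast; ring
    have e2 : ((aN - 1 : ℕ) : ℤ) = (aN : ℤ) - 1 := by omega
    rw [Mtx_append, Mtx_append, Mtx_reverse, Mtx_cons, Mtx_single, e1, e2]
  have key0 : Mtx (m ++ [aN + 1, aN - 1] ++ m.reverse) 0 0 = P ^ 2 := by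
    rw [hBig, hPe]
    simp only [Matrix.mul_apply, Fin.sum_univ_two, Matrix.transpose_apply,
      Matrix.cons_val_zero, Matrix.cons_val_one, Matrix.head_cons, Matrix.head_fin_const,
      Matrix.cons_val', Matrix.empty_val', Matrix.cons_val_fin_one, Matrix.of_apply]
    ring
  have key1 : Mtx (m ++ [aN + 1, aN - 1] ++ m.reverse) 1 0 =
      P * Q + (-1) ^ (m.length + 1) := by
    rw [hBig, hPe, hQe, pow_succ]
    simp only [Matrix.mul_apply, Fin.sum_univ_two, Matrix.transpose_apply,
      Matrix.cons_val_zero, Matrix.cons_val_one, Matrix.head_cons, Matrix.head_fin_const,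
      Matrix.cons_val', Matrix.empty_val', Matrix.cons_val_fin_one, Matrix.of_apply]
    linear_combination (-1 : ℤ) * hdet
  rw [cf_eq _ hposB, key0, key1, hnum]
  have hdenQ : ((cfQ (List.map (fun x : ℕ => (x : ℚ)) (m ++ [aN]))).den : ℚ) = ((Q : ℤ) : ℚ) := by
    exact_mod_cast hden
  rw [hdenQ]
  push_cast
  ring
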